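/- Let ℤ[1/4] denote the additive subgroup of ℚ consisting of all rationals of the form a / 4^n with a ∈ ℤ and n ∈ ℕ. Consider System C (C_n = ℤ with every transition map equal to multiplication by 4) and System B (B_n = ℤ⁴ with every transition map (x, y, z, w) ↦ (s, s, s, s), s = x + y + z + w). The levelwise maps Δ_n : C_n → B_n, x ↦ (x, x, x, x), commute with the transition maps of the two systems, and hence induce a group homomorphism Δ : colim C_n → colim B_n on the direct limits. Under the isomorphism χ : colim C_n ≅ ℤ[1/4] (class of x ∈ C_n ↦ x / 4^n) and the isomorphism ψ : colim B_n ≅ ℤ[1/4] (class of (x, y, z, w) ∈ B_n ↦ (x + y + z + w) / 4^{n+1}), the induced map Δ corresponds to the identity map of ℤ[1/4]; that is, ψ ∘ Δ = χ. -/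
import Mathlib

/-- The step map of System B: `(x, y, z, w) ↦ (s, s, s, s)` where `s = x + y + z + w`. -/
def stepB : (ℤ × ℤ × ℤ × ℤ) →+ (ℤ × ℤ × ℤ × ℤ) where
  toFun p := (p.1 + p.2.1 + p.2.2.1 + p.2.2.2, p.1 + p.2.1 + p.2.2.1 + p.2.2.2,
    p.1 + p.2.1 + p.2.2.1 + p.2.2.2, p.1 + p.2.1 + p.2.2.1 + p.2.2.2)
  map_zero' := by simp
  map_add' p q := by
    simp only [Prod.fst_add, Prod.snd_add, Prod.mk_add_mk, Prod.mk.injEq]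
    refine ⟨?_, ?_, ?_, ?_⟩ <;> ring

/-- `stepB` viewed as an additive monoid endomorphism, so that it can be iterated. -/
def stepBEnd : AddMonoid.End (ℤ × ℤ × ℤ × ℤ) := stepB

/-- System B: the transition map from level `i` to level `j` is the `(j-i)`-fold
iterate of `stepB`. -/
def sysB : ∀ i j : ℕ, i ≤ j → (ℤ × ℤ × ℤ × ℤ) →+ (ℤ × ℤ × ℤ × ℤ) :=
  fun i j _ => stepBEnd ^ (j - i)

/-- The step map of System C: multiplication by `4` on `ℤ`. -/
def stepC : ℤ →+ ℤ where
  toFun x := 4 * x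
  map_zero' := by simp
  map_add' x y := by ring

/-- `stepC` viewed as an additive monoid endomorphism, so that it can be iterated. -/
def stepCEnd : AddMonoid.End ℤ := stepC

/-- System C: the transition map from level `i` to level `j` is the `(j-i)`-fold
iterate of `stepC`. -/
def sysC : ∀ i j : ℕ, i ≤ j → ℤ →+ ℤ :=
  fun i j _ => stepCEnd ^ (j - i)

/-- The levelwise map `Δ_n : C_n → B_n`, `x ↦ (x, x, x, x)`. -/
def DmapCB : ℤ →+ (ℤ × ℤ × ℤ × ℤ) where
  toFun x := (x, x, x, x)
  map_zero' := by simp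
  map_add' x y := by simp

lemma comm_step (x : ℤ) : stepB (DmapCB x) = DmapCB (stepC x) := by
  simp only [stepB, stepC, DmapCB, AddMonoidHom.coe_mk, ZeroHom.coe_mk]
  norm_num; ring

lemma comm_pow (k : ℕ) : ∀ (x : ℤ), (stepBEnd ^ k) (DmapCB x) = DmapCB ((stepCEnd ^ k) x) := by
  induction k with
  | zero => exact fun x => rfl
  | succ n ih =>
      intro x
      rw [pow_succ, pow_succ]
      show (stepBEnd ^ n) (stepBEnd (DmapCB x)) = DmapCB ((stepCEnd ^ n) (stepCEnd x))
      rw [show stepBEnd (DmapCB x) = DmapCB (stepCEnd x) from comm_step x]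
      exact ih (stepCEnd x)

/-- The levelwise maps `x ↦ (x, x, x, x)` commute with the transition maps of Systems C
and B, hence induce a group homomorphism `Δ` on the direct limits; under the isomorphisms
`χ : colim C_n ≅ ℤ[1/4]` and `ψ : colim B_n ≅ ℤ[1/4]`, the induced map `Δ` corresponds
to the identity of `ℤ[1/4]`, i.e. `ψ ∘ Δ = χ`. -/
theorem inducedMap_DmapCB_corresponds_to_id :
    (∀ x : ℤ, stepB (DmapCB x) = DmapCB (stepC x)) ∧
    ∃ Δ : AddCommGroup.DirectLimit (fun _ : ℕ => ℤ) sysC →+ AddCommGroup.DirectLimit (fun _ : ℕ => ℤ × ℤ × ℤ × ℤ) sysB,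
      (∀ (n : ℕ) (x : ℤ), Δ (AddCommGroup.DirectLimit.of (fun _ : ℕ => ℤ) sysC n x) = AddCommGroup.DirectLimit.of (fun _ : ℕ => ℤ × ℤ × ℤ × ℤ) sysB n (DmapCB x)) ∧
      ∀ (χ : AddCommGroup.DirectLimit (fun _ : ℕ => ℤ) sysC →+ ℚ) (ψ : AddCommGroup.DirectLimit (fun _ : ℕ => ℤ × ℤ × ℤ × ℤ) sysB →+ ℚ),
        (∀ (n : ℕ) (x : ℤ), χ (AddCommGroup.DirectLimit.of (fun _ : ℕ => ℤ) sysC n x) = (x : ℚ) / 4 ^ n) →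
        (∀ (n : ℕ) (x : ℤ × ℤ × ℤ × ℤ), ψ (AddCommGroup.DirectLimit.of (fun _ : ℕ => ℤ × ℤ × ℤ × ℤ) sysB n x) = ((x.1 : ℚ) + (x.2.1 : ℚ) + (x.2.2.1 : ℚ) + (x.2.2.2 : ℚ)) / 4 ^ (n + 1)) →
        ∀ a, ψ (Δ a) = χ a := by
  refine ⟨comm_step, ?_⟩
  refine ⟨AddCommGroup.DirectLimit.map (f := sysC) (f' := sysB) (fun _ => DmapCB)
    (fun i j h => DFunLike.ext _ _ fun x => (comm_pow (j - i) x).symm), ?_, ?_⟩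
  · intro n x
    exact AddCommGroup.DirectLimit.map_apply_of _ _ _
  · intro χ ψ hχ hψ a
    induction a using AddCommGroup.DirectLimit.induction_on with
    | ih n x =>
      rw [AddCommGroup.DirectLimit.map_apply_of, hψ, hχ]
      simp only [DmapCB, AddMonoidHom.coe_mk, ZeroHom.coe_mk]
      rw [pow_succ]
      ring
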